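/- Let Ω be a finite set, let q : Ω → ℝ satisfy q(ω) ≥ 0 for all ω, let a : Ω → ℝ satisfy a(ω) > 0 for all ω, and let c ∈ ℝ. Then the set {(t,e) ∈ ℝ^Ω × ℝ^Ω : t(ω) ≥ 0 and e(ω) ≥ 0 for all ω, and c ≤ ∑_{ω∈Ω} q(ω)·φ_{a(ω)}(t(ω), e(ω))} is a convex subset of ℝ^Ω × ℝ^Ω. -/

import Mathlib

/-- `φ_a(t,e) = t·log₂(1 + a·e/t)` for `t > 0`, extended by `0` for `t ≤ 0`. -/
noncomputable def phi (a t e : ℝ) : ℝ :=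
  if 0 < t then t * (Real.log (1 + a * e / t) / Real.log 2) else 0

lemma log2_pos : (0:ℝ) < Real.log 2 := Real.log_pos (by norm_num)

lemma div_le_div_of_nonneg_right' {a b c : ℝ} (h : a ≤ b) (hc : 0 < c) :
    a / c ≤ b / c := by
  exact (div_le_div_iff_of_pos_right hc).mpr h

lemma phi_key (a : ℝ) (ha : 0 < a) (t1 e1 t2 e2 u v : ℝ)
    (ht1 : 0 ≤ t1) (he1 : 0 ≤ e1) (ht2 : 0 ≤ t2) (he2 : 0 ≤ e2)
    (hu : 0 ≤ u) (hv : 0 ≤ v) (huv : u + v = 1) :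
    u * phi a t1 e1 + v * phi a t2 e2 ≤ phi a (u*t1+v*t2) (u*e1+v*e2) := by
  rcases hu.eq_or_lt with hu0 | hu0
  · have hv1 : v = 1 := by linarith
    simp [← hu0, hv1]
  rcases hv.eq_or_lt with hv0 | hv0
  · have hu1 : u = 1 := by linarith
    simp [← hv0, hu1]
  rcases ht1.eq_or_lt with h1 | h1 <;> rcases ht2.eq_or_lt with h2 | h2
  · simp [phi, ← h1, ← h2]
  · -- t1 = 0, t2 > 0
    subst h1
    have ht : 0 < u*0+v*t2 := by nlinarith
    have hA : (0:ℝ) < 1 + a*e2/t2 := by positivity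
    have hle : 1 + a*e2/t2 ≤ 1 + a*(u*e1+v*e2)/(u*0+v*t2) := by
      have : a*e2/t2 ≤ a*(u*e1+v*e2)/(u*0+v*t2) := by
        rw [div_le_div_iff₀ h2 ht]
        nlinarith [mul_nonneg (mul_nonneg (mul_nonneg ha.le hu) he1) ht2]
      linarith
    have hlog := Real.log_le_log hA hle
    simp only [phi, if_pos h2, if_pos ht]
    rw [if_neg (lt_irrefl (0:ℝ))]
    have hd : Real.log (1 + a*e2/t2) / Real.log 2
        ≤ Real.log (1 + a*(u*e1+v*e2)/(u*0+v*t2)) / Real.log 2 :=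
      div_le_div_of_nonneg_right' hlog log2_pos
    have hL : 0 ≤ Real.log (1 + a*e2/t2) / Real.log 2 := by
      apply div_nonneg _ log2_pos.le
      apply Real.log_nonneg; have : 0 ≤ a*e2/t2 := by positivity
      linarith
    calc u * 0 + v * (t2 * (Real.log (1 + a*e2/t2) / Real.log 2))
        = (v*t2) * (Real.log (1 + a*e2/t2) / Real.log 2) := by ring
      _ ≤ (u*0+v*t2) * (Real.log (1 + a*(u*e1+v*e2)/(u*0+v*t2)) / Real.log 2) := by
          apply mul_le_mul (by nlinarith) hd hL ht.le
  · -- t1 > 0, t2 = 0 (symmetric)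
    subst h2
    have ht : 0 < u*t1+v*0 := by nlinarith
    have hA : (0:ℝ) < 1 + a*e1/t1 := by positivity
    have hle : 1 + a*e1/t1 ≤ 1 + a*(u*e1+v*e2)/(u*t1+v*0) := by
      have : a*e1/t1 ≤ a*(u*e1+v*e2)/(u*t1+v*0) := by
        rw [div_le_div_iff₀ h1 ht]
        nlinarith [mul_nonneg (mul_nonneg (mul_nonneg ha.le hv) he2) ht1]
      linarith
    have hlog := Real.log_le_log hA hle
    simp only [phi, if_pos h1, if_pos ht]
    rw [if_neg (lt_irrefl (0:ℝ))]
    have hd : Real.log (1 + a*e1/t1) / Real.log 2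
        ≤ Real.log (1 + a*(u*e1+v*e2)/(u*t1+v*0)) / Real.log 2 :=
      div_le_div_of_nonneg_right' hlog log2_pos
    have hL : 0 ≤ Real.log (1 + a*e1/t1) / Real.log 2 := by
      apply div_nonneg _ log2_pos.le
      apply Real.log_nonneg; have : 0 ≤ a*e1/t1 := by positivity
      linarith
    calc u * (t1 * (Real.log (1 + a*e1/t1) / Real.log 2)) + v * 0
        = (u*t1) * (Real.log (1 + a*e1/t1) / Real.log 2) := by ring
      _ ≤ (u*t1+v*0) * (Real.log (1 + a*(u*e1+v*e2)/(u*t1+v*0)) / Real.log 2) := by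
          apply mul_le_mul (by nlinarith) hd hL ht.le
  · -- main case t1 > 0, t2 > 0
    set t := u*t1+v*t2 with hts
    have ht : 0 < t := by positivity
    have ht1' : t1 ≠ 0 := h1.ne'
    have ht2' : t2 ≠ 0 := h2.ne'
    have htne : t ≠ 0 := ht.ne'
    set x := (t1 + a*e1)/t1 with hx
    set y := (t2 + a*e2)/t2 with hy
    have hxpos : x ∈ Set.Ioi (0:ℝ) := by
      simp only [Set.mem_Ioi, hx]; positivity
    have hypos : y ∈ Set.Ioi (0:ℝ) := by
      simp only [Set.mem_Ioi, hy]; positivity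
    have hw1 : (0:ℝ) ≤ u*t1/t := by positivity
    have hw2 : (0:ℝ) ≤ v*t2/t := by positivity
    have hwsum : u*t1/t + v*t2/t = 1 := by field_simp; exact hts.symm
    have hcon := strictConcaveOn_log_Ioi.concaveOn.2 hxpos hypos hw1 hw2 hwsum
    simp only [smul_eq_mul] at hcon
    have harg : u*t1/t * x + v*t2/t * y = (t + a*(u*e1+v*e2))/t := by
      rw [hx, hy]; field_simp; ring
    rw [harg] at hcon
    have key : u*t1*Real.log x + v*t2*Real.log y
        ≤ t * Real.log ((t + a*(u*e1+v*e2))/t) := by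
      have h2' : t * (u*t1/t * Real.log x + v*t2/t * Real.log y)
          = u*t1*Real.log x + v*t2*Real.log y := by field_simp
      calc u*t1*Real.log x + v*t2*Real.log y
          = t * (u*t1/t * Real.log x + v*t2/t * Real.log y) := h2'.symm
        _ ≤ t * Real.log ((t + a*(u*e1+v*e2))/t) :=
            mul_le_mul_of_nonneg_left hcon ht.le
    have ex1 : 1 + a*e1/t1 = x := by rw [hx]; field_simp
    have ex2 : 1 + a*e2/t2 = y := by rw [hy]; field_simp
    have ex3 : 1 + a*(u*e1+v*e2)/t = (t + a*(u*e1+v*e2))/t := by field_simp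
    simp only [phi, if_pos h1, if_pos h2, if_pos ht, ex1, ex2, ex3]
    calc u * (t1 * (Real.log x / Real.log 2)) + v * (t2 * (Real.log y / Real.log 2))
        = (u*t1*Real.log x + v*t2*Real.log y) / Real.log 2 := by ring
      _ ≤ (t * Real.log ((t + a*(u*e1+v*e2))/t)) / Real.log 2 :=
          (div_le_div_iff_of_pos_right log2_pos).mpr key
      _ = t * (Real.log ((t + a*(u*e1+v*e2))/t) / Real.log 2) := by ring

/-- For a finite set `Ω`, nonnegative weights `q`, positive
constants `a ω` and a real constant `c`, the set
`{(t,e) : t ≥ 0, e ≥ 0, c ≤ ∑_ω q ω · φ_{a ω}(t ω, e ω)}` is convex. -/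
theorem stmt_5 {Ω : Type*} [Fintype Ω]
    (q : Ω → ℝ) (hq : ∀ ω, 0 ≤ q ω)
    (a : Ω → ℝ) (ha : ∀ ω, 0 < a ω) (c : ℝ) :
    Convex ℝ {te : (Ω → ℝ) × (Ω → ℝ) |
      (∀ ω, 0 ≤ te.1 ω) ∧ (∀ ω, 0 ≤ te.2 ω) ∧
      c ≤ ∑ ω, q ω * phi (a ω) (te.1 ω) (te.2 ω)} := by
  intro p hp r hr u v hu hv huv
  obtain ⟨hp1, hp2, hp3⟩ := hp
  obtain ⟨hr1, hr2, hr3⟩ := hr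
  refine ⟨?_, ?_, ?_⟩
  · intro ω
    simp only [Prod.fst_add, Prod.smul_fst, Pi.add_apply, Pi.smul_apply, smul_eq_mul]
    exact add_nonneg (mul_nonneg hu (hp1 ω)) (mul_nonneg hv (hr1 ω))
  · intro ω
    simp only [Prod.snd_add, Prod.smul_snd, Pi.add_apply, Pi.smul_apply, smul_eq_mul]
    exact add_nonneg (mul_nonneg hu (hp2 ω)) (mul_nonneg hv (hr2 ω))
  · simp only [Prod.fst_add, Prod.snd_add, Prod.smul_fst, Prod.smul_snd, Pi.add_apply,
      Pi.smul_apply, smul_eq_mul]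
    calc c = u * c + v * c := by rw [← add_mul, huv, one_mul]
      _ ≤ u * (∑ ω, q ω * phi (a ω) (p.1 ω) (p.2 ω))
          + v * (∑ ω, q ω * phi (a ω) (r.1 ω) (r.2 ω)) :=
        add_le_add (mul_le_mul_of_nonneg_left hp3 hu) (mul_le_mul_of_nonneg_left hr3 hv)
      _ = ∑ ω, (q ω * (u * phi (a ω) (p.1 ω) (p.2 ω) + v * phi (a ω) (r.1 ω) (r.2 ω))) := by
        rw [Finset.mul_sum, Finset.mul_sum, ← Finset.sum_add_distrib]
        exact Finset.sum_congr rfl fun ω _ => by ring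
      _ ≤ ∑ ω, q ω * phi (a ω) (u * p.1 ω + v * r.1 ω) (u * p.2 ω + v * r.2 ω) :=
        Finset.sum_le_sum fun ω _ => mul_le_mul_of_nonneg_left
          (phi_key (a ω) (ha ω) _ _ _ _ u v (hp1 ω) (hp2 ω) (hr1 ω) (hr2 ω) hu hv huv)
          (hq ω)
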